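/- Assume the positivity condition: θ_k ∈ (0,π) for all 1 ≤ k ≤ N with ∑_{k=1}^N θ_k = 2π. Consider the N hyperplanes H_k := {λ ∈ ℝ^{N−2} : λ_k = 0} for 1 ≤ k ≤ N, where λ_{N−1} := vᵀλ and λ_N := wᵀλ. Then H_1,…,H_N are pairwise distinct if and only if it is NOT the case that N = 3, and NOT the case that N = 4 with θ_k + θ_{k+1} = π for some 1 ≤ k ≤ 4 (indices taken cyclically modulo 4). -/

import Mathlib

/-- The cumulative angle `φ_k = ∑_{a=1}^k θ_a`. -/
noncomputable def phiAng (θ : ℕ → ℝ) (k : ℕ) : ℝ := ∑ a ∈ Finset.Icc 1 k, θ a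

/-- The signed-area quadratic form `Q` on `ℝ^{N-2}` (coordinates indexed `1,…,N-2`). -/
noncomputable def Qform (N : ℕ) (θ : ℕ → ℝ) (lam : ℕ → ℝ) : ℝ :=
  -(1/2) * ∑ j ∈ Finset.Icc 1 (N-2),
      Real.sin (phiAng θ N - phiAng θ j) * Real.sin (phiAng θ (N-1) - phiAng θ j)
        / Real.sin (θ N) * (lam j)^2
  - ∑ j ∈ Finset.Icc 1 (N-2), ∑ k ∈ Finset.Icc (j+1) (N-2),
      Real.sin (phiAng θ N - phiAng θ j) * Real.sin (phiAng θ (N-1) - phiAng θ k)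
        / Real.sin (θ N) * (lam j * lam k)

/-- The vector `v`, `v_j = -sin(φ_N - φ_j)/sin(θ_N)`. -/
noncomputable def vvec (N : ℕ) (θ : ℕ → ℝ) (j : ℕ) : ℝ :=
  -(Real.sin (phiAng θ N - phiAng θ j)) / Real.sin (θ N)

/-- The vector `w`, `w_j = sin(φ_{N-1} - φ_j)/sin(θ_N)`. -/
noncomputable def wvec (N : ℕ) (θ : ℕ → ℝ) (j : ℕ) : ℝ :=
  Real.sin (phiAng θ (N-1) - phiAng θ j) / Real.sin (θ N)

/-- The extended side lengths: `λ_k` for `k ≤ N-2`, `λ_{N-1} = vᵀλ`, `λ_N = wᵀλ`. -/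
noncomputable def lamExt (N : ℕ) (θ : ℕ → ℝ) (lam : ℕ → ℝ) (k : ℕ) : ℝ :=
  if k = N - 1 then ∑ j ∈ Finset.Icc 1 (N-2), vvec N θ j * lam j
  else if k = N then ∑ j ∈ Finset.Icc 1 (N-2), wvec N θ j * lam j
  else lam k

lemma phiAng_eq_Ioc (θ : ℕ → ℝ) (k : ℕ) : phiAng θ k = ∑ a ∈ Finset.Ioc 0 k, θ a := by
  rw [phiAng, ← Finset.Icc_add_one_left_eq_Ioc, zero_add]

lemma phiAng_diff (θ : ℕ → ℝ) {i j : ℕ} (h : i ≤ j) :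
    phiAng θ j - phiAng θ i = ∑ a ∈ Finset.Ioc i j, θ a := by
  rw [phiAng_eq_Ioc, phiAng_eq_Ioc, ← Finset.sum_Ioc_consecutive θ (Nat.zero_le i) h]
  ring

lemma phiAng_succ (θ : ℕ → ℝ) (k : ℕ) : phiAng θ (k+1) = phiAng θ k + θ (k+1) := by
  have h := phiAng_diff θ (Nat.le_succ k)
  have h2 : Finset.Ioc k (k+1) = {k+1} := by
    rw [← Finset.Icc_add_one_left_eq_Ioc, Finset.Icc_self]
  rw [h2, Finset.sum_singleton] at h
  linarith

lemma sin_zero_pi {x : ℝ} (h0 : 0 < x) (h2 : x < 2*Real.pi) (hs : Real.sin x = 0) :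
    x = Real.pi := by
  obtain ⟨n, hn⟩ := Real.sin_eq_zero_iff.1 hs
  have hpi := Real.pi_pos
  have h1 : (0:ℝ) < (n:ℝ) := by nlinarith
  have h2' : ((n:ℝ)) < 2 := by nlinarith
  have hn1 : (0:ℤ) < n := by exact_mod_cast h1
  have hn2 : (n:ℤ) < 2 := by exact_mod_cast h2'
  have : n = 1 := by omega
  subst this
  simpa using hn.symm

lemma sum_indicator (s : Finset ℕ) (u : ℕ → ℝ) (i : ℕ) (hi : i ∈ s) (c : ℝ) :
    ∑ j ∈ s, u j * (if j = i then c else 0) = u i * c := by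
  rw [Finset.sum_eq_single i]
  · simp
  · intro b _ hb; simp [hb]
  · intro h; exact absurd hi h

lemma sum_indicator2 (s : Finset ℕ) (u : ℕ → ℝ) (i i' : ℕ) (hi : i ∈ s) (hi' : i' ∈ s)
    (c d : ℝ) :
    ∑ j ∈ s, u j * ((if j = i then c else 0) + (if j = i' then d else 0))
      = u i * c + u i' * d := by
  rw [show (∑ j ∈ s, u j * ((if j = i then c else 0) + (if j = i' then d else 0)))
      = (∑ j ∈ s, u j * (if j = i then c else 0))
        + ∑ j ∈ s, u j * (if j = i' then d else 0) by
    rw [← Finset.sum_add_distrib]; exact Finset.sum_congr rfl fun x _ => by ring,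
    sum_indicator s u i hi c, sum_indicator s u i' hi' d]

lemma trig_det (a b t : ℝ) :
    (Real.sin a / Real.sin t) * (Real.sin (2*Real.pi - t - b) / Real.sin t)
      - (Real.sin b / Real.sin t) * (Real.sin (2*Real.pi - t - a) / Real.sin t)
      = Real.sin (b - a) * Real.sin t / (Real.sin t * Real.sin t) := by
  have h1 : ∀ x : ℝ, Real.sin (2*Real.pi - t - x)
      = -(Real.sin t * Real.cos x + Real.cos t * Real.sin x) := by
    intro x
    rw [show 2*Real.pi - t - x = 2*Real.pi - (t+x) by ring, Real.sin_sub,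
      Real.sin_two_pi, Real.cos_two_pi, Real.sin_add]
    ring
  rw [h1, h1, Real.sin_sub]
  field_simp
  rcases eq_or_ne (Real.sin t) 0 with ht | ht
  · simp [ht]
  · field_simp; ring

/-- The `N` hyperplanes `{λ : λ_k = 0}` (with `λ_{N-1} = vᵀλ`, `λ_N = wᵀλ`) are pairwise
distinct if and only if it is not the case that `N = 3`, and not the case that `N = 4` with
`θ_k + θ_{k+1} = π` for some `k` (indices cyclic mod 4). -/
theorem stmt5 (N : ℕ) (hN : 3 ≤ N) (θ : ℕ → ℝ)
    (hθ : ∀ k, 1 ≤ k → k ≤ N → θ k ∈ Set.Ioo 0 Real.pi)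
    (hsum : ∑ k ∈ Finset.Icc 1 N, θ k = 2 * Real.pi) :
    (∀ j k, 1 ≤ j → j ≤ N → 1 ≤ k → k ≤ N → j ≠ k →
        {lam : ℕ → ℝ | lamExt N θ lam j = 0} ≠ {lam : ℕ → ℝ | lamExt N θ lam k = 0})
      ↔ ¬(N = 3) ∧ ¬(N = 4 ∧ ∃ k, 1 ≤ k ∧ k ≤ 4 ∧ θ k + θ (k % 4 + 1) = Real.pi) := by
  have hπ := Real.pi_pos
  have hθpos : ∀ k, 1 ≤ k → k ≤ N → 0 < θ k := fun k h1 h2 => (hθ k h1 h2).1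
  have hsin : ∀ k, 1 ≤ k → k ≤ N → 0 < Real.sin (θ k) :=
    fun k h1 h2 => Real.sin_pos_of_pos_of_lt_pi (hθ k h1 h2).1 (hθ k h1 h2).2
  have hsN : Real.sin (θ N) ≠ 0 := ne_of_gt (hsin N (by omega) le_rfl)
  have hφN : phiAng θ N = 2 * Real.pi := hsum
  have hφ0 : phiAng θ 0 = 0 := by simp [phiAng]
  have hφ1 : phiAng θ 1 = θ 1 := by simp [phiAng]
  have hlt : ∀ i j, i < j → j ≤ N → phiAng θ i < phiAng θ j := by
    intro i j hij hjN
    have hd := phiAng_diff θ hij.le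
    have hpos : 0 < ∑ a ∈ Finset.Ioc i j, θ a := by
      apply Finset.sum_pos
      · intro a ha
        have := Finset.mem_Ioc.1 ha
        exact hθpos a (by omega) (by omega)
      · exact ⟨j, Finset.mem_Ioc.2 ⟨hij, le_rfl⟩⟩
    linarith
  have hle : ∀ i j, i ≤ j → j ≤ N → phiAng θ i ≤ phiAng θ j := by
    intro i j hij hjN
    rcases eq_or_lt_of_le hij with rfl | h
    · exact le_rfl
    · exact (hlt i j h hjN).le
  have hpi2 : ∀ i j, i < j → j ≤ N-1 → Real.sin (phiAng θ j - phiAng θ i) = 0 →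
      phiAng θ j - phiAng θ i = Real.pi := by
    intro i j hij hjN hs
    have h1 : phiAng θ i < phiAng θ j := hlt i j hij (by omega)
    have h2 : phiAng θ j ≤ phiAng θ (N-1) := hle j (N-1) hjN (by omega)
    have h3 : phiAng θ (N-1) < phiAng θ N := hlt (N-1) N (by omega) le_rfl
    have h4 : phiAng θ 0 ≤ phiAng θ i := hle 0 i (by omega) (by omega)
    exact sin_zero_pi (by linarith) (by linarith) hs
  have hφN1 : phiAng θ (N-1) = 2*Real.pi - θ N := by
    have h := phiAng_succ θ (N-1)
    rw [show N-1+1 = N by omega] at h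
    linarith
  have hv : ∀ i, vvec N θ i = Real.sin (phiAng θ i) / Real.sin (θ N) := by
    intro i
    rw [vvec, hφN, Real.sin_sub, Real.sin_two_pi, Real.cos_two_pi]
    ring_nf
  have hw : ∀ i, wvec N θ i = Real.sin (phiAng θ (N-1) - phiAng θ i) / Real.sin (θ N) :=
    fun _ => rfl
  have hcoord : ∀ (lam : ℕ → ℝ) j, 1 ≤ j → j ≤ N-2 → lamExt N θ lam j = lam j := by
    intro lam j h1 h2
    rw [lamExt, if_neg (by omega), if_neg (by omega)]
  have hvsum : ∀ (lam : ℕ → ℝ),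
      lamExt N θ lam (N-1) = ∑ j ∈ Finset.Icc 1 (N-2), vvec N θ j * lam j := by
    intro lam; rw [lamExt, if_pos rfl]
  have hwsum : ∀ (lam : ℕ → ℝ),
      lamExt N θ lam N = ∑ j ∈ Finset.Icc 1 (N-2), wvec N θ j * lam j := by
    intro lam; rw [lamExt, if_neg (by omega), if_pos rfl]
  have hdet : ∀ i i', vvec N θ i * wvec N θ i' - vvec N θ i' * wvec N θ i
      = Real.sin (phiAng θ i' - phiAng θ i) * Real.sin (θ N)
        / (Real.sin (θ N) * Real.sin (θ N)) := by
    intro i i'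
    rw [hv, hv, hw, hw, hφN1]
    exact trig_det (phiAng θ i) (phiAng θ i') (θ N)
  have hsinphi : ∀ i, 1 ≤ i → i ≤ N-1 → Real.sin (phiAng θ i) = 0 →
      phiAng θ i = Real.pi := by
    intro i h1 h2 h0
    have := hpi2 0 i (by omega) h2 (by rw [hφ0, sub_zero]; exact h0)
    rw [hφ0] at this; linarith
  constructor
  · -- forward direction
    intro hdist
    constructor
    · intro h3
      subst h3
      apply hdist 1 2 (by norm_num) (by norm_num) (by norm_num) (by norm_num) (by norm_num)
      ext lam
      simp only [Set.mem_setOf_eq]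
      rw [hcoord lam 1 (by norm_num) (by norm_num)]
      rw [show (2:ℕ) = 3 - 1 from rfl, hvsum lam]
      rw [show (3:ℕ) - 2 = 1 from rfl, Finset.Icc_self, Finset.sum_singleton]
      rw [hv 1, hφ1]
      have h1 : Real.sin (θ 1) ≠ 0 := ne_of_gt (hsin 1 (by norm_num) (by norm_num))
      constructor
      · intro h; rw [h, mul_zero]
      · intro h
        rcases mul_eq_zero.1 h with h | h
        · exact absurd h (div_ne_zero h1 hsN)
        · exact h
    · rintro ⟨h4, k, hk1, hk4, hk⟩
      subst h4
      have e1 := phiAng_succ θ 1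
      have e2 := phiAng_succ θ 2
      have e3 := phiAng_succ θ 3
      norm_num at e1 e2 e3
      have caseA : θ 1 + θ 2 = Real.pi → False := by
        intro hA
        apply hdist 1 3 (by norm_num) (by norm_num) (by norm_num) (by norm_num) (by norm_num)
        ext lam
        simp only [Set.mem_setOf_eq]
        rw [hcoord lam 1 (by norm_num) (by norm_num)]
        rw [show (3:ℕ) = 4 - 1 from rfl, hvsum lam]
        rw [show (4:ℕ) - 2 = 2 from rfl]
        rw [show Finset.Icc 1 2 = ({1, 2} : Finset ℕ) from rfl,
          Finset.sum_pair (by norm_num : (1:ℕ) ≠ 2)]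
        rw [hv 1, hv 2, hφ1]
        have hφ2 : phiAng θ 2 = Real.pi := by rw [e1, hφ1]; linarith
        rw [hφ2, Real.sin_pi, zero_div, zero_mul, add_zero]
        have h1 : Real.sin (θ 1) ≠ 0 := ne_of_gt (hsin 1 (by norm_num) (by norm_num))
        constructor
        · intro h; rw [h, mul_zero]
        · intro h
          rcases mul_eq_zero.1 h with h | h
          · exact absurd h (div_ne_zero h1 hsN)
          · exact h
      have caseB : θ 2 + θ 3 = Real.pi → False := by
        intro hB
        apply hdist 2 4 (by norm_num) (by norm_num) (by norm_num) (by norm_num) (by norm_num)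
        ext lam
        simp only [Set.mem_setOf_eq]
        rw [hcoord lam 2 (by norm_num) (by norm_num)]
        rw [hwsum lam]
        rw [show (4:ℕ) - 2 = 2 from rfl]
        rw [show Finset.Icc 1 2 = ({1, 2} : Finset ℕ) from rfl,
          Finset.sum_pair (by norm_num : (1:ℕ) ≠ 2)]
        rw [hw 1, hw 2]
        rw [show (4:ℕ) - 1 = 3 from rfl]
        have hd1 : phiAng θ 3 - phiAng θ 1 = Real.pi := by rw [e2, e1]; linarith
        have hd2 : phiAng θ 3 - phiAng θ 2 = θ 3 := by rw [e2]; ring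
        rw [hd1, hd2, Real.sin_pi, zero_div, zero_mul, zero_add]
        have h3' : Real.sin (θ 3) ≠ 0 := ne_of_gt (hsin 3 (by norm_num) (by norm_num))
        constructor
        · intro h; rw [h, mul_zero]
        · intro h
          rcases mul_eq_zero.1 h with h | h
          · exact absurd h (div_ne_zero h3' hsN)
          · exact h
      interval_cases k <;> norm_num at hk
      · exact caseA hk
      · exact caseB hk
      · apply caseA
        have h4' : θ 1 + θ 2 + θ 3 + θ 4 = 2 * Real.pi := by
          have : phiAng θ 4 = 2 * Real.pi := hφN
          rw [e3, e2, e1, hφ1] at this; linarith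
        linarith
      · apply caseB
        have h4' : θ 1 + θ 2 + θ 3 + θ 4 = 2 * Real.pi := by
          have : phiAng θ 4 = 2 * Real.pi := hφN
          rw [e3, e2, e1, hφ1] at this; linarith
        linarith
  · -- backward direction
    rintro ⟨h3, h4⟩
    have hN4' : 4 ≤ N := by omega
    have neq : ∀ a b : ℕ, (∃ lam : ℕ → ℝ, lamExt N θ lam a = 0 ∧ lamExt N θ lam b ≠ 0) →
        {lam : ℕ → ℝ | lamExt N θ lam a = 0} ≠ {lam : ℕ → ℝ | lamExt N θ lam b = 0} := by
      rintro a b ⟨lam, h0, h1⟩ heq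
      have hmem : lam ∈ {lam : ℕ → ℝ | lamExt N θ lam a = 0} := h0
      rw [heq] at hmem
      exact h1 hmem
    have main : ∀ a b : ℕ, 1 ≤ a → a < b → b ≤ N →
        {lam : ℕ → ℝ | lamExt N θ lam a = 0} ≠ {lam : ℕ → ℝ | lamExt N θ lam b = 0} := by
      intro a b ha hab hbN
      by_cases hb2 : b ≤ N - 2
      · apply neq
        refine ⟨fun t => if t = b then (1:ℝ) else 0, ?_, ?_⟩
        · rw [hcoord _ a ha (by omega)]
          simp [hab.ne]
        · rw [hcoord _ b (by omega) hb2]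
          simp
      · by_cases hbN1 : b = N - 1
        · subst hbN1
          have ha2 : a ≤ N - 2 := by omega
          obtain ⟨i, hi1, hi2, hia, hsi⟩ :
              ∃ i, 1 ≤ i ∧ i ≤ N-2 ∧ i ≠ a ∧ Real.sin (phiAng θ i) ≠ 0 := by
            by_cases hA : a = 1
            · subst hA
              by_cases hN4 : N = 4
              · refine ⟨2, by omega, by omega, by omega, ?_⟩
                intro h0
                have hp2 : phiAng θ 2 = Real.pi := hsinphi 2 (by omega) (by omega) h0
                exact h4 ⟨hN4, 1, by norm_num, by norm_num, by
                  norm_num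
                  have e1 := phiAng_succ θ 1
                  norm_num at e1
                  rw [e1, hφ1] at hp2
                  linarith⟩
              · by_cases hs2 : Real.sin (phiAng θ 2) = 0
                · refine ⟨3, by omega, by omega, by omega, ?_⟩
                  intro hs3
                  have p2 := hsinphi 2 (by omega) (by omega) hs2
                  have p3 := hsinphi 3 (by omega) (by omega) hs3
                  have := hlt 2 3 (by omega) (by omega)
                  linarith
                · exact ⟨2, by omega, by omega, by omega, hs2⟩
            · refine ⟨1, le_rfl, by omega, fun h => hA h.symm, ?_⟩
              rw [hφ1]
              exact ne_of_gt (hsin 1 (by omega) (by omega))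
          apply neq
          refine ⟨fun t => if t = i then (1:ℝ) else 0, ?_, ?_⟩
          · rw [hcoord _ a ha ha2]
            simp [Ne.symm hia]
          · rw [hvsum]
            rw [sum_indicator _ _ i (Finset.mem_Icc.2 ⟨hi1, hi2⟩) 1]
            rw [hv i, mul_one]
            exact div_ne_zero hsi hsN
        · have hbN' : b = N := by omega
          rw [hbN']
          by_cases ha2 : a ≤ N - 2
          · obtain ⟨i, hi1, hi2, hia, hsi⟩ :
                ∃ i, 1 ≤ i ∧ i ≤ N-2 ∧ i ≠ a ∧
                  Real.sin (phiAng θ (N-1) - phiAng θ i) ≠ 0 := by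
              by_cases hA : a = N - 2
              · subst hA
                by_cases hN4 : N = 4
                · refine ⟨1, le_rfl, by omega, by omega, ?_⟩
                  intro h0
                  have hp := hpi2 1 (N-1) (by omega) (by omega) h0
                  apply h4
                  refine ⟨hN4, 2, by norm_num, by norm_num, ?_⟩
                  norm_num
                  subst hN4
                  have e1 := phiAng_succ θ 1
                  have e2 := phiAng_succ θ 2
                  norm_num at e1 e2 hp
                  rw [e2, e1] at hp
                  linarith
                · by_cases hsA : Real.sin (phiAng θ (N-1) - phiAng θ (N-3)) = 0
                  · refine ⟨N-4, by omega, by omega, by omega, ?_⟩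
                    intro hsB
                    have pA := hpi2 (N-3) (N-1) (by omega) le_rfl hsA
                    have pB := hpi2 (N-4) (N-1) (by omega) le_rfl hsB
                    have := hlt (N-4) (N-3) (by omega) (by omega)
                    linarith
                  · exact ⟨N-3, by omega, by omega, by omega, hsA⟩
              · refine ⟨N-2, by omega, le_rfl, fun h => hA h.symm, ?_⟩
                have hst : phiAng θ (N-1) - phiAng θ (N-2) = θ (N-1) := by
                  have h := phiAng_succ θ (N-2)
                  rw [show N-2+1 = N-1 by omega] at h
                  linarith
                rw [hst]
                exact ne_of_gt (hsin (N-1) (by omega) (by omega))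
            apply neq
            refine ⟨fun t => if t = i then (1:ℝ) else 0, ?_, ?_⟩
            · rw [hcoord _ a ha ha2]
              simp [Ne.symm hia]
            · rw [hwsum]
              rw [sum_indicator _ _ i (Finset.mem_Icc.2 ⟨hi1, hi2⟩) 1]
              rw [hw i, mul_one]
              exact div_ne_zero hsi hsN
          · have haN1 : a = N - 1 := by omega
            subst haN1
            obtain ⟨i, i', hi1, hii', hi'2, hsd⟩ :
                ∃ i i', 1 ≤ i ∧ i < i' ∧ i' ≤ N-2 ∧
                  Real.sin (phiAng θ i' - phiAng θ i) ≠ 0 := by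
              by_cases hN4 : N = 4
              · refine ⟨1, 2, le_rfl, by omega, by omega, ?_⟩
                have e1 := phiAng_succ θ 1
                norm_num at e1
                rw [e1]
                rw [show phiAng θ 1 + θ 2 - phiAng θ 1 = θ 2 by ring]
                exact ne_of_gt (hsin 2 (by omega) (by omega))
              · by_cases hs2 : Real.sin (phiAng θ 2 - phiAng θ 1) = 0
                · refine ⟨1, 3, le_rfl, by omega, by omega, ?_⟩
                  intro hs3
                  have p2 := hpi2 1 2 (by omega) (by omega) hs2
                  have p3 := hpi2 1 3 (by omega) (by omega) hs3
                  have := hlt 2 3 (by omega) (by omega)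
                  linarith
                · exact ⟨1, 2, le_rfl, by omega, by omega, hs2⟩
            have hmemi : i ∈ Finset.Icc 1 (N-2) := Finset.mem_Icc.2 ⟨hi1, by omega⟩
            have hmemi' : i' ∈ Finset.Icc 1 (N-2) := Finset.mem_Icc.2 ⟨by omega, hi'2⟩
            apply neq
            refine ⟨fun t => (if t = i then vvec N θ i' else 0)
              + (if t = i' then -(vvec N θ i) else 0), ?_, ?_⟩
            · rw [hvsum, sum_indicator2 _ _ i i' hmemi hmemi']
              ring
            · rw [hwsum, sum_indicator2 _ _ i i' hmemi hmemi']
              intro h0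
              apply hsd
              have hd := hdet i i'
              have hz : Real.sin (phiAng θ i' - phiAng θ i) * Real.sin (θ N)
                  / (Real.sin (θ N) * Real.sin (θ N)) = 0 := by
                rw [← hd]; linarith
              rcases div_eq_zero_iff.1 hz with h | h
              · rcases mul_eq_zero.1 h with h | h
                · exact h
                · exact absurd h hsN
              · exact absurd h (mul_ne_zero hsN hsN)
    intro j k hj1 hjN hk1 hkN hjk
    rcases lt_or_gt_of_ne hjk with h | h
    · exact main j k hj1 h hkN
    · exact (main k j hk1 h hjN).symm
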